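/- Drift coefficient asymptotics for the rescaled Moran line counting process. Assume strong or moderately strong selection. For every compact set K ⊆ ℝ, writing x̂ := μ_N + x σ_N, one has lim_{N→∞} sup_{x ∈ E_N ∩ K} | (1/σ_N) ( x̂ (1 − x̂/N) − (γ/(2 s_N N)) x̂ (x̂ − 1) ) + x | = 0; that is, the normalised difference between the up-rate and the down-rate of the time-rescaled, centred and normalised line counting process converges to the Ornstein–Uhlenbeck drift −x, uniformly on compact sets intersected with the lattice E_N. -/

import Mathlib

open Filter

lemma alg_identity (m σ n x : ℝ) (hm : m ≠ 0) (hσ : σ ≠ 0) (hn : n ≠ 0)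
    (h1 : σ^2 = m*(n-m)/n) :
    (1/σ)*((m+x*σ)*(1 - (m+x*σ)/n) - ((n-m)/(m*n))*(m+x*σ)*((m+x*σ)-1)) + x
      = (σ/m)*(1 + x*(σ/m) - x^2) := by
  have h2 : σ^2 * n = m*(n-m) := by field_simp at h1; linarith
  field_simp
  linear_combination (-m - σ*x) * h2

/-- Drift coefficient asymptotics for the rescaled Moran line counting process:
the normalised difference between the up-rate and the down-rate converges to the
Ornstein–Uhlenbeck drift `-x`, uniformly on compact sets intersected with `E_N`. -/
theorem moran_drift_asymptotics
    (γ : ℝ) (hγ : 0 < γ) (s : ℕ → ℝ) (hs : ∀ N, 0 < s N)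
    (hconv : ∃ l : ℝ, 0 ≤ l ∧ Tendsto s atTop (nhds l))
    (hNs : Tendsto (fun N : ℕ => (N : ℝ) * s N) atTop atTop)
    (μ σ : ℕ → ℝ)
    (hμ : ∀ N : ℕ, μ N = 2 * s N * N / (2 * s N + γ))
    (hσ : ∀ N : ℕ, σ N =
      Real.sqrt ((2 * s N / (2 * s N + γ)) * (1 - 2 * s N / (2 * s N + γ)) * N))
    (E : ℕ → Set ℝ)
    (hE : ∀ N : ℕ, E N = {x : ℝ | ∃ k : ℕ, 1 ≤ k ∧ k ≤ N ∧ x = ((k : ℝ) - μ N) / σ N})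
    (K : Set ℝ) (hK : IsCompact K) :
    Tendsto (fun N : ℕ =>
      sSup ((fun x : ℝ =>
        |(1 / σ N) * ((μ N + x * σ N) * (1 - (μ N + x * σ N) / N)
            - (γ / (2 * s N * N)) * (μ N + x * σ N) * ((μ N + x * σ N) - 1))
          + x|) '' (E N ∩ K)))
      atTop (nhds 0) := by
  -- a bound on K
  obtain ⟨r, hr⟩ := hK.isBounded.subset_closedBall 0
  set C : ℝ := max r 0 with hCdef
  have hC0 : 0 ≤ C := le_max_right _ _
  have hCK : ∀ x ∈ K, |x| ≤ C := by
    intro x hx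
    have := hr hx
    simp only [Metric.mem_closedBall, Real.dist_eq, sub_zero] at this
    exact this.trans (le_max_left _ _)
  set ε : ℕ → ℝ := fun N => σ N / μ N with hεdef
  -- basic facts for N ≥ 1
  have key : ∀ N : ℕ, 1 ≤ N → 0 < μ N ∧ 0 < σ N ∧
      σ N ^ 2 = μ N * ((N : ℝ) - μ N) / N ∧
      γ / (2 * s N * N) = ((N : ℝ) - μ N) / (μ N * N) := by
    intro N hN
    have hsN := hs N
    have hNR : (0 : ℝ) < N := by exact_mod_cast hN
    have hden : (0 : ℝ) < 2 * s N + γ := by linarith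
    have ha0 : 0 < 2 * s N / (2 * s N + γ) := by positivity
    have ha1 : 2 * s N / (2 * s N + γ) < 1 := by
      rw [div_lt_one hden]; linarith
    have hμpos : 0 < μ N := by
      rw [hμ N]; positivity
    have hargpos : 0 < (2 * s N / (2 * s N + γ)) * (1 - 2 * s N / (2 * s N + γ)) * N := by
      have : 0 < 1 - 2 * s N / (2 * s N + γ) := by linarith
      positivity
    have hσpos : 0 < σ N := by
      rw [hσ N]; exact Real.sqrt_pos.mpr hargpos
    have hσsq : σ N ^ 2 = (2 * s N / (2 * s N + γ)) * (1 - 2 * s N / (2 * s N + γ)) * N := by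
      rw [hσ N]; exact Real.sq_sqrt hargpos.le
    refine ⟨hμpos, hσpos, ?_, ?_⟩
    · rw [hσsq, hμ N]
      field_simp
    · rw [hμ N]
      rw [div_eq_div_iff (by positivity) (by positivity)]
      field_simp
      ring
  have hεnonneg : ∀ N : ℕ, 1 ≤ N → 0 ≤ ε N := by
    intro N hN
    obtain ⟨h1, h2, _, _⟩ := key N hN
    exact div_nonneg h2.le h1.le
  have hεsq : ∀ N : ℕ, 1 ≤ N → ε N ^ 2 = γ / (2 * s N * N) := by
    intro N hN
    obtain ⟨h1, h2, h3, h4⟩ := key N hN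
    have hNR : (0 : ℝ) < N := by exact_mod_cast hN
    rw [h4, hεdef]
    simp only
    rw [div_pow, h3]
    field_simp
  -- ε tends to 0
  have hquot : Tendsto (fun N : ℕ => γ / (2 * s N * N)) atTop (nhds 0) := by
    have h2 : Tendsto (fun N : ℕ => 2 * s N * N) atTop atTop := by
      have := hNs.const_mul_atTop (by norm_num : (0:ℝ) < 2)
      apply this.congr
      intro N; ring
    exact Tendsto.div_atTop tendsto_const_nhds h2
  have hεtend : Tendsto ε atTop (nhds 0) := by
    have hsqrt : Tendsto (fun N : ℕ => Real.sqrt (γ / (2 * s N * N))) atTop (nhds 0) := by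
      have := (Real.continuous_sqrt.tendsto' 0 0 Real.sqrt_zero).comp hquot
      exact this
    apply hsqrt.congr'
    filter_upwards [eventually_ge_atTop 1] with N hN
    rw [← hεsq N hN, Real.sqrt_sq (hεnonneg N hN)]
  -- the majorant
  have hgtend : Tendsto (fun N : ℕ => ε N * (1 + C * ε N + C ^ 2)) atTop (nhds 0) := by
    have : Tendsto (fun N : ℕ => 1 + C * ε N + C ^ 2) atTop
        (nhds (1 + C * 0 + C ^ 2)) := by
      exact ((tendsto_const_nhds.add (tendsto_const_nhds.mul hεtend)).add tendsto_const_nhds)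
    have h := hεtend.mul this
    rw [zero_mul] at h
    exact h
  apply squeeze_zero' (g := fun N : ℕ => ε N * (1 + C * ε N + C ^ 2))
  · filter_upwards with N
    apply Real.sSup_nonneg
    rintro y ⟨x, hx, rfl⟩
    exact abs_nonneg _
  · filter_upwards [eventually_ge_atTop 1] with N hN
    obtain ⟨hμpos, hσpos, h3, h4⟩ := key N hN
    have hNR : (0 : ℝ) < N := by exact_mod_cast hN
    have hε0 := hεnonneg N hN
    apply Real.sSup_le
    · rintro y ⟨x, ⟨hxE, hxK⟩, rfl⟩
      have hxC := hCK x hxK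
      simp only
      rw [h4, alg_identity (μ N) (σ N) N x hμpos.ne' hσpos.ne' hNR.ne' h3]
      rw [abs_mul]
      have hεabs : |σ N / μ N| = ε N := abs_of_nonneg hε0
      rw [hεabs]
      have hw : |1 + x * (σ N / μ N) - x ^ 2| ≤ 1 + C * ε N + C ^ 2 := by
        rw [abs_le]
        have h1 : x * (σ N / μ N) ≤ C * ε N := by
          calc x * (σ N / μ N) ≤ |x| * ε N := by
                rw [show ε N = σ N / μ N from rfl]
                exact mul_le_mul_of_nonneg_right (le_abs_self x) hε0
            _ ≤ C * ε N := mul_le_mul_of_nonneg_right hxC hε0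
        have h2 : -(C * ε N) ≤ x * (σ N / μ N) := by
          have : -|x| * ε N ≤ x * (σ N / μ N) := by
            rw [show ε N = σ N / μ N from rfl]
            exact mul_le_mul_of_nonneg_right (neg_abs_le x) hε0
          have h' : -(C * ε N) ≤ -|x| * ε N := by
            have := mul_le_mul_of_nonneg_right hxC hε0
            nlinarith
          linarith
        have h3' : x ^ 2 ≤ C ^ 2 := by
          have := sq_abs x
          nlinarith [abs_nonneg x]
        constructor <;> nlinarith [sq_nonneg x]
      exact mul_le_mul_of_nonneg_left hw hε0
    · have : 0 ≤ 1 + C * ε N + C ^ 2 := by positivity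
      positivity
  · exact hgtend
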